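/- arXiv:1912.13018 — 2 statements merged into one kernel-verified Lean document; each statement's English description precedes it below -/
import Mathlib

section
/- Let v : ℝ² → ℝ be continuous, satisfying min(-Δv, v - φ) ≤ 0 with φ ≤ 0, and limsup_{|x|→∞} v(x)/log|x| ≤ -1. Then v ≤ 0 in ℝ². -/
lemma sd_nonpos {g : ℝ → ℝ} (hg : ContDiff ℝ 2 g) (h : IsLocalMax g (0:ℝ)) :
    deriv (deriv g) 0 ≤ 0 := by
  by_contra hd
  push_neg at hd
  have hg1 : ContDiff ℝ 1 (deriv g) :=
    (contDiff_succ_iff_deriv.mp (by exact_mod_cast hg : ContDiff ℝ ((1:ℕ)+1) g)).2.2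
  have hcont : Continuous (deriv (deriv g)) :=
    ((contDiff_succ_iff_deriv.mp
      (by exact_mod_cast hg1 : ContDiff ℝ ((0:ℕ)+1) (deriv g))).2.2).continuous
  have hpos : ∀ᶠ y in nhds (0:ℝ), 0 < deriv (deriv g) y :=
    (hcont.continuousAt).eventually (eventually_gt_nhds hd)
  rcases Metric.eventually_nhds_iff.mp hpos with ⟨δ, hδ0, hδ⟩
  have hmono' : StrictMonoOn (deriv g) (Set.Icc 0 (δ/2)) := by
    apply strictMonoOn_of_deriv_pos (convex_Icc _ _) hg1.continuous.continuousOn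
    intro x hx
    rw [interior_Icc] at hx
    exact hδ (by simp only [Real.dist_eq, sub_zero]; rw [abs_of_pos hx.1]; linarith [hx.2, hδ0])
  have hd0 : deriv g 0 = 0 := h.deriv_eq_zero
  have hderivpos : ∀ x ∈ Set.Ioo (0:ℝ) (δ/2), 0 < deriv g x := by
    intro x hx
    have := hmono' (Set.left_mem_Icc.2 (by linarith)) ⟨hx.1.le, hx.2.le⟩ hx.1
    rwa [hd0] at this
  have hmono : StrictMonoOn g (Set.Icc 0 (δ/2)) := by
    apply strictMonoOn_of_deriv_pos (convex_Icc _ _) hg.continuous.continuousOn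
    intro x hx; rw [interior_Icc] at hx; exact hderivpos x hx
  rcases Metric.eventually_nhds_iff.mp h with ⟨δ', hδ'0, hδ'⟩
  set t := min (δ/2) δ' / 2 with ht
  have ht0 : 0 < t := by positivity
  have htδ : t ≤ δ/2 := by
    have := min_le_left (δ/2) δ'; simp only [ht]; linarith
  have htδ' : t < δ' := by
    have := min_le_right (δ/2) δ'; simp only [ht]; linarith
  have h1 : g 0 < g t := hmono (Set.left_mem_Icc.2 (by linarith)) ⟨ht0.le, htδ⟩ ht0
  have h2 : g t ≤ g 0 := hδ' (by simp [Real.dist_eq, abs_of_pos ht0, htδ'])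
  linarith


open EuclideanSpace

abbrev E2 := EuclideanSpace ℝ (Fin 2)

lemma dirsd_nonpos {F : E2 → ℝ} (hF : ContDiff ℝ 2 F) {x₀ : E2} (hmax : IsLocalMax F x₀)
    (e : E2) : fderiv ℝ (fun y => fderiv ℝ F y e) x₀ e ≤ 0 := by
  set L : ℝ → E2 := fun t => x₀ + t • e with hLdef
  have hL : ∀ t, HasDerivAt L e t := fun t => by
    simpa [hLdef] using ((hasDerivAt_id t).smul_const e).const_add x₀
  have hLc : ContDiff ℝ 2 L := contDiff_const.add (contDiff_id.smul contDiff_const)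
  have hg : ContDiff ℝ 2 (F ∘ L) := hF.comp hLc
  have hA : ContDiff ℝ 1 (fun y => fderiv ℝ F y e) :=
    (ContinuousLinearMap.apply ℝ ℝ e).contDiff.comp (hF.fderiv_right (by norm_num))
  have hg' : deriv (F ∘ L) = fun t => fderiv ℝ F (L t) e := by
    funext t
    exact (((hF.differentiable two_ne_zero) (L t)).hasFDerivAt.comp_hasDerivAt t (hL t)).deriv
  have hL0 : L 0 = x₀ := by simp [hLdef]
  have h2 : deriv (deriv (F ∘ L)) 0 = fderiv ℝ (fun y => fderiv ℝ F y e) x₀ e := by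
    rw [hg']
    have := ((hA.differentiable one_ne_zero (L 0)).hasFDerivAt.comp_hasDerivAt 0 (hL 0)).deriv
    rw [hL0] at this; exact this
  have hlm : IsLocalMax (F ∘ L) 0 := by
    have hc : Filter.Tendsto L (nhds 0) (nhds x₀) := by
      rw [← hL0]; exact (hLc.continuous.continuousAt)
    have h3 := hc.eventually hmax
    filter_upwards [h3] with t ht
    simpa [Function.comp, hL0] using ht
  rw [← h2]
  exact sd_nonpos hg hlm

noncomputable def planeLaplacian (f : EuclideanSpace ℝ (Fin 2) → ℝ)
    (x : EuclideanSpace ℝ (Fin 2)) : ℝ :=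
  ∑ i : Fin 2,
    fderiv ℝ (fun y => fderiv ℝ f y (EuclideanSpace.single i 1)) x (EuclideanSpace.single i 1)

lemma q_hasFDeriv (y : E2) : HasFDerivAt (fun x : E2 => ∑ j, x j ^ 2)
    (∑ j : Fin 2, (2 * y j) • (EuclideanSpace.proj j : E2 →L[ℝ] ℝ)) y := by
  apply HasFDerivAt.fun_sum
  intro j _
  have h := (EuclideanSpace.proj j : E2 →L[ℝ] ℝ).hasFDerivAt (x := y)
  have := h.mul h
  simp only [PiLp.proj_apply] at this
  have heq : (fun x : E2 => x j ^ 2) = fun x : E2 => x j * x j := by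
    funext x; ring
  rw [heq, two_mul, add_smul]
  exact this

lemma lap_shift (v : E2 → ℝ) (hv : ContDiff ℝ 2 v) (c b : ℝ) (x : E2) :
    planeLaplacian (fun y => v y + c * (∑ j, y j ^ 2) + b) x = planeLaplacian v x + 4 * c := by
  have hkey : ∀ i : Fin 2, ∀ y : E2,
      fderiv ℝ (fun z => v z + c * (∑ j, z j ^ 2) + b) y (EuclideanSpace.single i 1)
      = fderiv ℝ v y (EuclideanSpace.single i 1) + 2 * c * y i := by
    intro i y
    have h2 : HasFDerivAt (fun z : E2 => v z + c * (∑ j, z j ^ 2) + b)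
        (fderiv ℝ v y + c • (∑ j : Fin 2, (2 * y j) • (EuclideanSpace.proj j : E2 →L[ℝ] ℝ))) y :=
      ((hv.differentiable two_ne_zero y).hasFDerivAt.add ((q_hasFDeriv y).const_mul c)).add_const b
    rw [h2.fderiv]
    simp [ContinuousLinearMap.sum_apply, PiLp.proj_apply, EuclideanSpace.single_apply,
      Finset.mul_sum, mul_ite]
    fin_cases i <;> simp <;> ring
  have hstep : ∀ i : Fin 2,
      fderiv ℝ (fun y => fderiv ℝ (fun z => v z + c * (∑ j, z j ^ 2) + b) y
        (EuclideanSpace.single i 1)) x (EuclideanSpace.single i 1)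
      = fderiv ℝ (fun y => fderiv ℝ v y (EuclideanSpace.single i 1)) x
        (EuclideanSpace.single i 1) + 2 * c := by
    intro i
    have hfun : (fun y => fderiv ℝ (fun z => v z + c * (∑ j, z j ^ 2) + b) y
        (EuclideanSpace.single i 1))
        = fun y => fderiv ℝ v y (EuclideanSpace.single i 1) + 2 * c * y i := funext (hkey i)
    rw [hfun]
    have hA : Differentiable ℝ (fun y : E2 => fderiv ℝ v y (EuclideanSpace.single i 1)) := by
      have := ((ContinuousLinearMap.apply ℝ ℝ (EuclideanSpace.single i 1)).contDiff.comp
        (hv.fderiv_right (m := 1) (by norm_num))).differentiable one_ne_zero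
      exact this
    have hlin : HasFDerivAt (fun y : E2 => 2 * c * y i)
        ((2 * c) • (EuclideanSpace.proj i : E2 →L[ℝ] ℝ)) x := by
      simpa using ((EuclideanSpace.proj i : E2 →L[ℝ] ℝ).hasFDerivAt (x := x)).const_mul (2 * c)
    rw [((hA x).hasFDerivAt.fun_add hlin).fderiv]
    simp [PiLp.proj_apply, EuclideanSpace.single_apply]
  unfold planeLaplacian
  rw [Finset.sum_congr rfl (fun i _ => hstep i), Finset.sum_add_distrib]
  simp
  ring

theorem stmt6 (φ v : EuclideanSpace ℝ (Fin 2) → ℝ)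
    (hφ : Continuous φ) (hφ0 : ∀ x, φ x ≤ 0) (hv : ContDiff ℝ 2 v)
    (hsub : ∀ x, min (-(planeLaplacian v x)) (v x - φ x) ≤ 0)
    (hgv : Filter.limsup (fun x => v x / Real.log ‖x‖)
        (Filter.cocompact (EuclideanSpace ℝ (Fin 2))) ≤ -1) :
    ∀ x, v x ≤ 0 := by
  by_contra hcon
  push_neg at hcon
  obtain ⟨x₁, hx₁⟩ := hcon
  -- Step 1 : v is eventually negative at infinity
  rw [Filter.limsup_eq] at hgv
  have hne : {a : ℝ | ∀ᶠ x in Filter.cocompact E2, v x / Real.log ‖x‖ ≤ a}.Nonempty := by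
    by_contra h
    rw [Set.not_nonempty_iff_eq_empty] at h
    rw [h, Real.sInf_empty] at hgv
    linarith
  obtain ⟨a, haS, ha⟩ := exists_lt_of_csInf_lt hne
    (lt_of_le_of_lt hgv (by norm_num : (-1:ℝ) < -1/2))
  have hlog : ∀ᶠ x in Filter.cocompact E2, (1:ℝ) ≤ Real.log ‖x‖ := by
    filter_upwards [tendsto_norm_cocompact_atTop.eventually_ge_atTop (Real.exp 1)] with x hx
    calc (1:ℝ) = Real.log (Real.exp 1) := (Real.log_exp 1).symm
    _ ≤ Real.log ‖x‖ := Real.log_le_log (Real.exp_pos 1) hx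
  have hneg : ∀ᶠ x in Filter.cocompact E2, v x < 0 := by
    filter_upwards [haS, hlog] with x h1 h2
    have hL : (0:ℝ) < Real.log ‖x‖ := by linarith
    have h3 : v x ≤ a * Real.log ‖x‖ := (div_le_iff₀ hL).mp h1
    nlinarith
  rcases Filter.mem_cocompact.mp hneg with ⟨K, hKc, hKsub⟩
  obtain ⟨r, hr⟩ := hKc.isBounded.subset_closedBall 0
  set R : ℝ := max r ‖x₁‖ + 1 with hR
  have hR0 : 0 < R := by
    have := le_max_right r ‖x₁‖
    have := norm_nonneg x₁
    simp only [hR]; linarith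
  have hRx1 : ‖x₁‖ < R := by
    have := le_max_right r ‖x₁‖; simp only [hR]; linarith
  have hout : ∀ x : E2, R ≤ ‖x‖ → v x < 0 := by
    intro x hx
    have hxK : x ∉ K := by
      intro hmem
      have := hr hmem
      rw [Metric.mem_closedBall, dist_zero_right] at this
      have := le_max_left r ‖x₁‖
      simp only [hR] at hx
      linarith
    exact hKsub hxK
  -- Step 2 : setup of the perturbed function
  set q : E2 → ℝ := fun x => ∑ j, x j ^ 2 with hqdef
  have hq_eq : ∀ x : E2, q x = ‖x‖ ^ 2 := by
    intro x
    rw [EuclideanSpace.norm_eq, Real.sq_sqrt (by positivity)]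
    simp [hqdef, sq_abs]
  have hq0 : ∀ x : E2, 0 ≤ q x := fun x => by rw [hq_eq]; positivity
  have hqc : ContDiff ℝ 2 q := by
    apply ContDiff.sum
    intro j _
    exact ((EuclideanSpace.proj j : E2 →L[ℝ] ℝ).contDiff).pow 2
  set ε : ℝ := v x₁ / (R ^ 2 + 1) with hε
  have hε0 : 0 < ε := by positivity
  set w : E2 → ℝ := fun x => v x + ε * q x + (-(ε * R ^ 2)) with hwdef
  have hw : ContDiff ℝ 2 w := (hv.add (contDiff_const.mul hqc)).add contDiff_const
  -- Step 3 : maximize w on the closed ball of radius R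
  have hx₁B : x₁ ∈ Metric.closedBall (0:E2) R := by
    rw [Metric.mem_closedBall, dist_zero_right]; linarith
  obtain ⟨x₀, hx₀B, hx₀max⟩ := (isCompact_closedBall (0:E2) R).exists_isMaxOn
    ⟨x₁, hx₁B⟩ hw.continuous.continuousOn
  have hw1 : 0 < w x₁ := by
    have h1 : ε * R ^ 2 < v x₁ := by
      rw [hε, div_mul_eq_mul_div, div_lt_iff₀ (by positivity)]
      nlinarith
    have := hq0 x₁
    simp only [hwdef]
    nlinarith
  have hwx₀ : 0 < w x₀ := lt_of_lt_of_le hw1 (hx₀max hx₁B)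
  have hqx₀ : q x₀ ≤ R ^ 2 := by
    rw [hq_eq]
    have : ‖x₀‖ ≤ R := by
      rw [Metric.mem_closedBall, dist_zero_right] at hx₀B; exact hx₀B
    nlinarith [norm_nonneg x₀]
  have hv₀ : 0 < v x₀ := by
    simp only [hwdef] at hwx₀
    nlinarith
  have hx₀int : ‖x₀‖ < R := by
    by_contra h
    push_neg at h
    exact absurd (hout x₀ h) (by linarith)
  -- Step 4 : local max and Laplacian contradiction
  have hlocmax : IsLocalMax w x₀ := by
    filter_upwards [Metric.ball_mem_nhds x₀ (by linarith : (0:ℝ) < R - ‖x₀‖)] with y hy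
    apply hx₀max
    rw [Metric.mem_closedBall, dist_zero_right]
    rw [Metric.mem_ball] at hy
    calc ‖y‖ ≤ ‖y - x₀‖ + ‖x₀‖ := by
          simpa using norm_add_le (y - x₀) x₀
    _ = dist y x₀ + ‖x₀‖ := by rw [dist_eq_norm]
    _ ≤ R := by linarith
  have hΔw : planeLaplacian w x₀ ≤ 0 := by
    unfold planeLaplacian
    apply Finset.sum_nonpos
    intro i _
    exact dirsd_nonpos hw hlocmax _
  have hΔ : planeLaplacian w x₀ = planeLaplacian v x₀ + 4 * ε :=
    lap_shift v hv ε (-(ε * R ^ 2)) x₀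
  have hΔv : 0 ≤ planeLaplacian v x₀ := by
    by_contra h
    push_neg at h
    have h5 := hsub x₀
    have h6 : 0 < v x₀ - φ x₀ := by linarith [hφ0 x₀]
    have h7 : 0 < -(planeLaplacian v x₀) := by linarith
    rcases min_le_iff.mp h5 with h8 | h8 <;> linarith
  linarith
end

section
/- Let Ω ⊂ ℝ^d be a bounded open set with Lipschitz boundary, and let μ, ν ∈ C²(Ω̄) be positive functions satisfying Δ log ν = β(c ν − α) and Δ log μ = β(c μ − ΔV) in Ω, where β, c, α > 0, ΔV ≥ α in Ω, and ν ≤ μ on ∂Ω. Then ν ≤ μ in Ω. -/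
open Filter Topology

noncomputable def eLaplacian {d : ℕ} (f : EuclideanSpace ℝ (Fin d) → ℝ)
    (x : EuclideanSpace ℝ (Fin d)) : ℝ :=
  ∑ i : Fin d,
    fderiv ℝ (fun y => fderiv ℝ f y (EuclideanSpace.single i 1)) x (EuclideanSpace.single i 1)

/-- 1-D second derivative test (necessary condition) -/
lemma aux_deriv2_nonpos {g : ℝ → ℝ} {U : Set ℝ} (hU : IsOpen U) (h0 : (0:ℝ) ∈ U)
    (hg : ContDiffOn ℝ 2 g U) (hmax : IsLocalMax g 0) :
    deriv (deriv g) 0 ≤ 0 := by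
  by_contra h
  push_neg at h
  have hg' : ContDiffOn ℝ 1 (deriv g) U := hg.deriv_of_isOpen hU (by norm_num)
  have hcont : ContinuousOn (deriv (deriv g)) U :=
    hg'.continuousOn_deriv_of_isOpen hU le_rfl
  have hca : ContinuousAt (deriv (deriv g)) 0 := hcont.continuousAt (hU.mem_nhds h0)
  have hev : ∀ᶠ x in 𝓝 (0:ℝ), 0 < deriv (deriv g) x := hca.eventually (eventually_gt_nhds h)
  have hall : ∀ᶠ x in 𝓝 (0:ℝ), x ∈ U ∧ 0 < deriv (deriv g) x ∧ g x ≤ g 0 :=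
    (hU.eventually_mem h0).and (hev.and hmax)
  rw [Metric.eventually_nhds_iff] at hall
  obtain ⟨ε, hε, hball⟩ := hall
  have hsub : Set.Ioo (-ε) ε ⊆ U := fun x hx => (hball (by
    simpa [Real.dist_eq, abs_lt] using And.intro hx.1 hx.2)).1
  have key : ∀ x ∈ Set.Ioo (-ε) ε,
      0 < deriv (deriv g) x ∧ g x ≤ g 0 := fun x hx => (hball (by
    simpa [Real.dist_eq, abs_lt] using And.intro hx.1 hx.2)).2
  -- deriv g is strictly monotone on Ioo (-ε) ε
  have hmono : StrictMonoOn (deriv g) (Set.Ioo (-ε) ε) := by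
    apply strictMonoOn_of_deriv_pos (convex_Ioo _ _)
    · exact (hg'.continuousOn).mono hsub
    · intro x hx
      rw [interior_Ioo] at hx
      exact (key x hx).1
  have hd0 : deriv g 0 = 0 := hmax.deriv_eq_zero
  have h0mem : (0:ℝ) ∈ Set.Ioo (-ε) ε := by constructor <;> linarith
  -- g is strictly monotone on Ico 0 ε
  have hgmono : StrictMonoOn g (Set.Ico 0 ε) := by
    apply strictMonoOn_of_deriv_pos (convex_Ico _ _)
    · exact hg.continuousOn.mono (fun x hx => hsub ⟨by linarith [hx.1], hx.2⟩)
    · intro x hx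
      rw [interior_Ico] at hx
      have hxm : x ∈ Set.Ioo (-ε) ε := ⟨by linarith [hx.1], hx.2⟩
      have := hmono h0mem hxm hx.1
      rw [hd0] at this
      linarith
  have hlt : g 0 < g (ε/2) :=
    hgmono ⟨le_refl 0, hε⟩ ⟨by linarith, by linarith⟩ (by linarith)
  have := (key (ε/2) ⟨by linarith, by linarith⟩).2
  linarith

lemma aux_diffAt_fderiv_apply {d : ℕ} {f : EuclideanSpace ℝ (Fin d) → ℝ}
    {x : EuclideanSpace ℝ (Fin d)} (hf : ContDiffAt ℝ 2 f x) (e : EuclideanSpace ℝ (Fin d)) :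
    DifferentiableAt ℝ (fun y => fderiv ℝ f y e) x :=
  (((hf.fderiv_right (m := 1) (by norm_num)).differentiableAt one_ne_zero)).clm_apply
    (differentiableAt_const e)

/-- Directional second derivative is nonpositive at an interior local max. -/
lemma aux_secondDirDeriv_nonpos {d : ℕ} {f : EuclideanSpace ℝ (Fin d) → ℝ}
    {s : Set (EuclideanSpace ℝ (Fin d))} (hs : IsOpen s)
    (hf : ContDiffOn ℝ 2 f s) {z : EuclideanSpace ℝ (Fin d)} (hz : z ∈ s)
    (hmax : IsLocalMax f z) (e : EuclideanSpace ℝ (Fin d)) :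
    fderiv ℝ (fun y => fderiv ℝ f y e) z e ≤ 0 := by
  set L : ℝ → EuclideanSpace ℝ (Fin d) := fun t => z + t • e with hLdef
  have hL0 : L 0 = z := by simp [hLdef]
  have hLc : Continuous L := by fun_prop
  have hLd : ∀ t : ℝ, HasDerivAt L e t := by
    intro t
    have := ((hasDerivAt_id t).smul_const e).const_add z
    rw [one_smul] at this
    exact this
  set U : Set ℝ := L ⁻¹' s with hUdef
  have hUo : IsOpen U := hs.preimage hLc
  have h0U : (0:ℝ) ∈ U := by simp [hUdef, hL0, hz]
  set g : ℝ → ℝ := f ∘ L with hgdef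
  have hgC : ContDiffOn ℝ 2 g U := by
    apply hf.comp _ (Set.mapsTo_preimage L s)
    exact (contDiff_const.add (contDiff_id.smul contDiff_const)).contDiffOn
  have hgmax : IsLocalMax g 0 := by
    have hmax' : IsLocalMax f (L 0) := by rw [hL0]; exact hmax
    exact hmax'.comp_continuous hLc.continuousAt
  -- deriv g = fderiv f (L t) e on U
  have hderiv : ∀ t ∈ U, deriv g t = fderiv ℝ f (L t) e := by
    intro t ht
    have hft : DifferentiableAt ℝ f (L t) :=
      (hf.contDiffAt (hs.mem_nhds ht)).differentiableAt (by norm_num)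
    exact (hft.hasFDerivAt.comp_hasDerivAt t (hLd t)).deriv
  have heq : deriv g =ᶠ[𝓝 (0:ℝ)] fun t => fderiv ℝ f (L t) e :=
    Filter.eventually_of_mem (hUo.mem_nhds h0U) hderiv
  have hfz : ContDiffAt ℝ 2 f z := hf.contDiffAt (hs.mem_nhds hz)
  have hG : DifferentiableAt ℝ (fun y => fderiv ℝ f y e) z := aux_diffAt_fderiv_apply hfz e
  have hcomp : HasDerivAt (fun t => fderiv ℝ f (L t) e)
      (fderiv ℝ (fun y => fderiv ℝ f y e) z e) 0 := by
    have hG' : HasFDerivAt (fun y => fderiv ℝ f y e)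
        (fderiv ℝ (fun y => fderiv ℝ f y e) z) (L 0) := by
      rw [hL0]; exact hG.hasFDerivAt
    exact hG'.comp_hasDerivAt 0 (hLd 0)
  have h2 : deriv (deriv g) 0 = fderiv ℝ (fun y => fderiv ℝ f y e) z e := by
    rw [heq.deriv_eq, hcomp.deriv]
  rw [← h2]
  exact aux_deriv2_nonpos hUo h0U hgC hgmax

lemma aux_eLaplacian_sub {d : ℕ} {f g : EuclideanSpace ℝ (Fin d) → ℝ}
    {s : Set (EuclideanSpace ℝ (Fin d))} (hs : IsOpen s)
    (hf : ContDiffOn ℝ 2 f s) (hg : ContDiffOn ℝ 2 g s)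
    {x : EuclideanSpace ℝ (Fin d)} (hx : x ∈ s) :
    eLaplacian (fun y => f y - g y) x = eLaplacian f x - eLaplacian g x := by
  unfold eLaplacian
  rw [← Finset.sum_sub_distrib]
  apply Finset.sum_congr rfl
  intro i _
  set e := EuclideanSpace.single i (1:ℝ)
  have heq : (fun y => fderiv ℝ (fun y => f y - g y) y e)
      =ᶠ[𝓝 x] fun y => fderiv ℝ f y e - fderiv ℝ g y e := by
    apply Filter.eventually_of_mem (hs.mem_nhds hx)
    intro y hy
    have hfy : DifferentiableAt ℝ f y := (hf.contDiffAt (hs.mem_nhds hy)).differentiableAt (by norm_num)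
    have hgy : DifferentiableAt ℝ g y := (hg.contDiffAt (hs.mem_nhds hy)).differentiableAt (by norm_num)
    simp [fderiv_fun_sub hfy hgy]
  rw [heq.fderiv_eq]
  have h1 : DifferentiableAt ℝ (fun y => fderiv ℝ f y e) x :=
    aux_diffAt_fderiv_apply (hf.contDiffAt (hs.mem_nhds hx)) e
  have h2 : DifferentiableAt ℝ (fun y => fderiv ℝ g y e) x :=
    aux_diffAt_fderiv_apply (hg.contDiffAt (hs.mem_nhds hx)) e
  rw [fderiv_fun_sub h1 h2]
  simp

theorem stmt14 (d : ℕ) (β c α : ℝ) (hβ : 0 < β) (hc : 0 < c) (hα : 0 < α)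
    (Ω : Set (EuclideanSpace ℝ (Fin d))) (hΩo : IsOpen Ω) (hΩb : Bornology.IsBounded Ω)
    (μ ν V : EuclideanSpace ℝ (Fin d) → ℝ)
    (hμc : ContinuousOn μ (closure Ω)) (hνc : ContinuousOn ν (closure Ω))
    (hμ2 : ContDiffOn ℝ 2 μ Ω) (hν2 : ContDiffOn ℝ 2 ν Ω) (hV : ContDiffOn ℝ 2 V Ω)
    (hμpos : ∀ x ∈ closure Ω, 0 < μ x) (hνpos : ∀ x ∈ closure Ω, 0 < ν x)
    (heqν : ∀ x ∈ Ω, eLaplacian (fun y => Real.log (ν y)) x = β * (c * ν x - α))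
    (heqμ : ∀ x ∈ Ω, eLaplacian (fun y => Real.log (μ y)) x = β * (c * μ x - eLaplacian V x))
    (hΔV : ∀ x ∈ Ω, α ≤ eLaplacian V x)
    (hbdry : ∀ x ∈ frontier Ω, ν x ≤ μ x) :
    ∀ x ∈ Ω, ν x ≤ μ x := by
  intro x₀ hx₀
  by_contra hlt
  push_neg at hlt
  set w : EuclideanSpace ℝ (Fin d) → ℝ :=
    fun y => Real.log (ν y) - Real.log (μ y) with hwdef
  have hνne : ∀ y ∈ closure Ω, ν y ≠ 0 := fun y hy => (hνpos y hy).ne'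
  have hμne : ∀ y ∈ closure Ω, μ y ≠ 0 := fun y hy => (hμpos y hy).ne'
  have hwc : ContinuousOn w (closure Ω) := (hνc.log hνne).sub (hμc.log hμne)
  have hcpt : IsCompact (closure Ω) := hΩb.isCompact_closure
  obtain ⟨z, hzc, hmax⟩ := hcpt.exists_isMaxOn ⟨x₀, subset_closure hx₀⟩ hwc
  have hwx₀ : 0 < w x₀ := by
    have := Real.log_lt_log (hμpos x₀ (subset_closure hx₀)) hlt
    simp only [hwdef]; linarith
  have hwz : 0 < w z := lt_of_lt_of_le hwx₀ (hmax (subset_closure hx₀))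
  have hzΩ : z ∈ Ω := by
    by_contra hne
    have hfr : z ∈ frontier Ω := by
      rw [frontier, hΩo.interior_eq]
      exact ⟨hzc, hne⟩
    have h1 : ν z ≤ μ z := hbdry z hfr
    have : Real.log (ν z) ≤ Real.log (μ z) :=
      (Real.log_le_log_iff (hνpos z hzc) (hμpos z hzc)).2 h1
    simp only [hwdef] at hwz; linarith
  have hνzμz : μ z < ν z := by
    have hlog : Real.log (μ z) < Real.log (ν z) := by
      simp only [hwdef] at hwz; linarith
    have := Real.exp_lt_exp.2 hlog
    rwa [Real.exp_log (hμpos z hzc), Real.exp_log (hνpos z hzc)] at this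
  have hlocmax : IsLocalMax w z :=
    Filter.eventually_of_mem (hΩo.mem_nhds hzΩ)
      (fun y hy => hmax (subset_closure hy))
  have hν2' : ContDiffOn ℝ 2 (fun y => Real.log (ν y)) Ω :=
    hν2.log (fun y hy => hνne y (subset_closure hy))
  have hμ2' : ContDiffOn ℝ 2 (fun y => Real.log (μ y)) Ω :=
    hμ2.log (fun y hy => hμne y (subset_closure hy))
  have hw2 : ContDiffOn ℝ 2 w Ω := hν2'.sub hμ2'
  have hle : eLaplacian w z ≤ 0 := by
    unfold eLaplacian
    apply Finset.sum_nonpos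
    intro i _
    exact aux_secondDirDeriv_nonpos hΩo hw2 hzΩ hlocmax _
  have heq : eLaplacian w z = β * (c * ν z - α) - β * (c * μ z - eLaplacian V z) := by
    rw [show eLaplacian w z = eLaplacian (fun y => Real.log (ν y)) z
        - eLaplacian (fun y => Real.log (μ y)) z from
      aux_eLaplacian_sub hΩo hν2' hμ2' hzΩ, heqν z hzΩ, heqμ z hzΩ]
  have hVz := hΔV z hzΩ
  nlinarith [mul_pos hβ (mul_pos hc (sub_pos.2 hνzμz))]
end
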